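/- arXiv:1712.06154 — 5 statements merged into one kernel-verified Lean document; each statement's English description precedes it below -/
import Mathlib

section
/- Let R be an involutive symmetry on V = ℂ^N, i.e. an invertible N²×N² complex matrix (acting on V⊗V) satisfying the braid relation R₁₂R₂₃R₁₂ = R₂₃R₁₂R₂₃ on V⊗V⊗V (where R₁₂ = R⊗I_N and R₂₃ = I_N⊗R are Kronecker products) and R² = I. Fix a ∈ ℂ and define the current R-matrix R(u,v) = R + (a/(u−v))·I for u ≠ v. Then for any pairwise distinct u, v, w ∈ ℂ the quantum Yang–Baxter equation with spectral parameters holds: R₁₂(u,v)·R₂₃(u,w)·R₁₂(v,w) = R₂₃(v,w)·R₁₂(u,w)·R₂₃(u,v). -/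
open Matrix

/-- For an `N² × N²` matrix `X` acting on `V ⊗ V` (`V = ℂ^N`), `op12 X = X ⊗ I_N`
acting on `V ⊗ V ⊗ V`. -/
def op12 {N : ℕ} (X : Matrix (Fin N × Fin N) (Fin N × Fin N) ℂ) :
    Matrix (Fin N × Fin N × Fin N) (Fin N × Fin N × Fin N) ℂ :=
  Matrix.of fun a b => X (a.1, a.2.1) (b.1, b.2.1) * (if a.2.2 = b.2.2 then 1 else 0)

/-- `op23 X = I_N ⊗ X` acting on `V ⊗ V ⊗ V`. -/
def op23 {N : ℕ} (X : Matrix (Fin N × Fin N) (Fin N × Fin N) ℂ) :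
    Matrix (Fin N × Fin N × Fin N) (Fin N × Fin N × Fin N) ℂ :=
  Matrix.of fun a b => (if a.1 = b.1 then 1 else 0) * X (a.2.1, a.2.2) (b.2.1, b.2.2)

lemma op12_mul {N : ℕ} (X Y : Matrix (Fin N × Fin N) (Fin N × Fin N) ℂ) :
    op12 (X * Y) = op12 X * op12 Y := by
  ext ⟨a, b, c⟩ ⟨d, e, f⟩
  simp [op12, mul_apply, Fintype.sum_prod_type, ite_and, mul_ite, ite_mul,
    Finset.sum_ite_eq, Finset.sum_ite_eq', Finset.mul_sum, Finset.sum_mul]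

lemma op23_mul {N : ℕ} (X Y : Matrix (Fin N × Fin N) (Fin N × Fin N) ℂ) :
    op23 (X * Y) = op23 X * op23 Y := by
  ext ⟨a, b, c⟩ ⟨d, e, f⟩
  simp [op23, mul_apply, Fintype.sum_prod_type, ite_and, mul_ite, ite_mul,
    Finset.sum_ite_eq, Finset.sum_ite_eq', Finset.mul_sum, Finset.sum_mul]

lemma op12_one {N : ℕ} : op12 (1 : Matrix (Fin N × Fin N) (Fin N × Fin N) ℂ) = 1 := by
  ext ⟨a, b, c⟩ ⟨d, e, f⟩
  simp [op12, one_apply, Prod.ext_iff, ite_and]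
  by_cases h1 : a = d <;> by_cases h2 : b = e <;> by_cases h3 : c = f <;> simp [h1, h2, h3]

lemma op23_one {N : ℕ} : op23 (1 : Matrix (Fin N × Fin N) (Fin N × Fin N) ℂ) = 1 := by
  ext ⟨a, b, c⟩ ⟨d, e, f⟩
  simp [op23, one_apply, Prod.ext_iff, ite_and]
  by_cases h1 : a = d <;> by_cases h2 : b = e <;> by_cases h3 : c = f <;> simp [h1, h2, h3]

lemma op12_add {N : ℕ} (X Y : Matrix (Fin N × Fin N) (Fin N × Fin N) ℂ) :
    op12 (X + Y) = op12 X + op12 Y := by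
  ext ⟨a, b, c⟩ ⟨d, e, f⟩
  simp [op12, add_mul]
  split <;> simp

lemma op23_add {N : ℕ} (X Y : Matrix (Fin N × Fin N) (Fin N × Fin N) ℂ) :
    op23 (X + Y) = op23 X + op23 Y := by
  ext ⟨a, b, c⟩ ⟨d, e, f⟩
  simp [op23, mul_add]

lemma op12_smul {N : ℕ} (c : ℂ) (X : Matrix (Fin N × Fin N) (Fin N × Fin N) ℂ) :
    op12 (c • X) = c • op12 X := by
  ext ⟨a, b, c⟩ ⟨d, e, f⟩
  simp [op12, mul_assoc]

lemma op23_smul {N : ℕ} (c : ℂ) (X : Matrix (Fin N × Fin N) (Fin N × Fin N) ℂ) :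
    op23 (c • X) = c • op23 X := by
  ext ⟨a, b, c⟩ ⟨d, e, f⟩
  simp [op23]

lemma key_ring {M : Type*} [Ring M] [Module ℂ M] [SMulCommClass ℂ M M]
    [IsScalarTower ℂ M M]
    (A B : M) (hA : A * A = 1) (hB : B * B = 1)
    (hbr : A * B * A = B * A * B) (α β γ : ℂ) (h : α * γ = α * β + β * γ) :
    (A + α • 1) * (B + β • 1) * (A + γ • 1)
      = (B + γ • 1) * (A + β • 1) * (B + α • 1) := by
  simp only [mul_add, add_mul, smul_mul_assoc, mul_smul_comm, mul_one, one_mul, smul_smul,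
    smul_add, hA, hB, hbr]
  match_scalars <;>
    first
      | linear_combination h
      | linear_combination -h
      | linear_combination 2 * h
      | linear_combination -2 * h
      | ring

/-- the Baxterized rational current `R`-matrix `R(u,v) = R + (a/(u-v))·I`
built from an involutive symmetry satisfies the quantum Yang–Baxter equation with
spectral parameters. -/
theorem baxterization_involutive {N : ℕ} (hN : 1 ≤ N)
    (R : Matrix (Fin N × Fin N) (Fin N × Fin N) ℂ)
    (hRinv : IsUnit R)
    (hbraid : op12 R * op23 R * op12 R = op23 R * op12 R * op23 R)
    (hinvol : R * R = 1)
    (a : ℂ)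
    (Rc : ℂ → ℂ → Matrix (Fin N × Fin N) (Fin N × Fin N) ℂ)
    (hRc : ∀ u v : ℂ, u ≠ v →
      Rc u v = R + (a / (u - v)) • (1 : Matrix (Fin N × Fin N) (Fin N × Fin N) ℂ))
    (u v w : ℂ) (huv : u ≠ v) (huw : u ≠ w) (hvw : v ≠ w) :
    op12 (Rc u v) * op23 (Rc u w) * op12 (Rc v w) =
      op23 (Rc v w) * op12 (Rc u w) * op23 (Rc u v) := by
  rw [hRc u v huv, hRc u w huw, hRc v w hvw]
  simp only [op12_add, op23_add, op12_smul, op23_smul, op12_one, op23_one]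
  have hA : op12 R * op12 R = 1 := by rw [← op12_mul, hinvol, op12_one]
  have hB : op23 R * op23 R = 1 := by rw [← op23_mul, hinvol, op23_one]
  apply key_ring _ _ hA hB hbraid
  have h1 : u - v ≠ 0 := sub_ne_zero.mpr huv
  have h2 : u - w ≠ 0 := sub_ne_zero.mpr huw
  have h3 : v - w ≠ 0 := sub_ne_zero.mpr hvw
  field_simp
  ring
end

section
/- Let R be a Hecke symmetry on V = ℂ^N, i.e. an invertible N²×N² complex matrix (acting on V⊗V) satisfying the braid relation R₁₂R₂₃R₁₂ = R₂₃R₁₂R₂₃ and the Hecke condition (R − qI)(R + q⁻¹I) = 0 for some q ∈ ℂ \ {0, 1, −1}. Define the current R-matrix R(u,v) = R − ((q−q⁻¹)u/(u−v))·I for u ≠ v. Then for any pairwise distinct u, v, w ∈ ℂ the quantum Yang–Baxter equation with spectral parameters holds: R₁₂(u,v)·R₂₃(u,w)·R₁₂(v,w) = R₂₃(v,w)·R₁₂(u,w)·R₂₃(u,v). -/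
open Matrix

lemma op12_sub {N : ℕ} (X Y : Matrix (Fin N × Fin N) (Fin N × Fin N) ℂ) :
    op12 (X - Y) = op12 X - op12 Y := by
  ext a b; simp only [op12, of_apply, Matrix.sub_apply, sub_mul]

lemma op23_sub {N : ℕ} (X Y : Matrix (Fin N × Fin N) (Fin N × Fin N) ℂ) :
    op23 (X - Y) = op23 X - op23 Y := by
  ext a b; simp only [op23, of_apply, Matrix.sub_apply, mul_sub]

lemma baxter_core {M : Type*} [Ring M] [Algebra ℂ M] (A B : M) (l a b c : ℂ)
    (hbraid : A * B * A = B * A * B) (hA2 : A * A = l • A + 1) (hB2 : B * B = l • B + 1)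
    (key : a * c = b * (a + c - l)) :
    (A - a • 1) * (B - b • 1) * (A - c • 1) = (B - c • 1) * (A - b • 1) * (B - a • 1) := by
  have expandL : (A - a • 1) * (B - b • 1) * (A - c • 1)
      = A * B * A - c • (A * B) - b • (A * A) - a • (B * A)
        + (b * c + a * b) • A + (a * c) • B - (a * b * c) • 1 := by
    simp only [sub_mul, mul_sub, smul_mul_assoc, mul_smul_comm, one_mul, mul_one, smul_smul,
      smul_sub, add_smul]
    module
  have expandR : (B - c • 1) * (A - b • 1) * (B - a • 1)
      = B * A * B - a • (B * A) - b • (B * B) - c • (A * B)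
        + (b * a + c * b) • B + (c * a) • A - (c * b * a) • 1 := by
    simp only [sub_mul, mul_sub, smul_mul_assoc, mul_smul_comm, one_mul, mul_one, smul_smul,
      smul_sub, add_smul]
    module
  rw [expandL, expandR, hbraid, hA2, hB2]
  match_scalars
  all_goals first | ring1 | linear_combination key | linear_combination -key


/-- the Baxterized trigonometric current `R`-matrix
`R(u,v) = R − ((q−q⁻¹)u/(u−v))·I` built from a Hecke symmetry satisfies the quantum
Yang–Baxter equation with spectral parameters. -/
theorem baxterization_hecke {N : ℕ} (hN : 1 ≤ N)
    (R : Matrix (Fin N × Fin N) (Fin N × Fin N) ℂ)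
    (hRinv : IsUnit R)
    (hbraid : op12 R * op23 R * op12 R = op23 R * op12 R * op23 R)
    (q : ℂ) (hq0 : q ≠ 0) (hq1 : q ≠ 1) (hqm1 : q ≠ -1)
    (hHecke : (R - q • (1 : Matrix (Fin N × Fin N) (Fin N × Fin N) ℂ)) *
      (R + q⁻¹ • (1 : Matrix (Fin N × Fin N) (Fin N × Fin N) ℂ)) = 0)
    (Rc : ℂ → ℂ → Matrix (Fin N × Fin N) (Fin N × Fin N) ℂ)
    (hRc : ∀ u v : ℂ, u ≠ v →
      Rc u v = R - ((q - q⁻¹) * u / (u - v)) • (1 : Matrix (Fin N × Fin N) (Fin N × Fin N) ℂ))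
    (u v w : ℂ) (huv : u ≠ v) (huw : u ≠ w) (hvw : v ≠ w) :
    op12 (Rc u v) * op23 (Rc u w) * op12 (Rc v w) =
      op23 (Rc v w) * op12 (Rc u w) * op23 (Rc u v) := by
  set l : ℂ := q - q⁻¹ with hl
  set a : ℂ := l * u / (u - v) with ha
  set b : ℂ := l * u / (u - w) with hb
  set c : ℂ := l * v / (v - w) with hc
  set A := op12 R with hA
  set B := op23 R with hB
  have hR2 : R * R = l • R + 1 := by
    have h := hHecke
    have e1 : (q • (1 : Matrix (Fin N × Fin N) (Fin N × Fin N) ℂ)) * (q⁻¹ • 1) = 1 := by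
      rw [smul_mul_assoc, one_mul, smul_smul, mul_inv_cancel₀ hq0, one_smul]
    rw [sub_mul, mul_add, mul_add, mul_smul_comm, mul_one, smul_mul_assoc, one_mul, e1,
      sub_eq_zero] at h
    have h2 : R * R = q • R + 1 - q⁻¹ • R := eq_sub_of_add_eq h
    rw [h2, hl, sub_smul]
    abel
  have hA2 : A * A = l • A + 1 := by
    rw [hA, ← op12_mul, hR2, op12_add, op12_smul, op12_one]
  have hB2 : B * B = l • B + 1 := by
    rw [hB, ← op23_mul, hR2, op23_add, op23_smul, op23_one]
  have h1 : op12 (Rc u v) = A - a • 1 := by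
    rw [hRc u v huv, op12_sub, op12_smul, op12_one]
  have h2 : op23 (Rc u w) = B - b • 1 := by
    rw [hRc u w huw, op23_sub, op23_smul, op23_one]
  have h3 : op12 (Rc v w) = A - c • 1 := by
    rw [hRc v w hvw, op12_sub, op12_smul, op12_one]
  have h4 : op23 (Rc v w) = B - c • 1 := by
    rw [hRc v w hvw, op23_sub, op23_smul, op23_one]
  have h5 : op12 (Rc u w) = A - b • 1 := by
    rw [hRc u w huw, op12_sub, op12_smul, op12_one]
  have h6 : op23 (Rc u v) = B - a • 1 := by
    rw [hRc u v huv, op23_sub, op23_smul, op23_one]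
  rw [h1, h2, h3, h4, h5, h6]
  have key : a * c = b * (a + c - l) := by
    rw [ha, hb, hc]
    have huv' : u - v ≠ 0 := sub_ne_zero.mpr huv
    have huw' : u - w ≠ 0 := sub_ne_zero.mpr huw
    have hvw' : v - w ≠ 0 := sub_ne_zero.mpr hvw
    field_simp
    ring
  exact baxter_core A B l a b c hbraid hA2 hB2 key
end

section
/- Let R be an invertible N²×N² complex matrix satisfying the braid relation R₁₂R₂₃R₁₂ = R₂₃R₁₂R₂₃, let 𝒜 be an associative unital ℂ-algebra, and let T⁺, T⁻, M be N×N matrices with entries in 𝒜 such that: (i) R·T₁⁺T₂⁺ = T₁⁺T₂⁺·R; (ii) R·T₁⁻T₂⁻ = T₁⁻T₂⁻·R; (iii) R·T₁⁺T₂⁻ = T₁⁻T₂⁺·R; and (iv) T⁻·M = M·T⁻ = I_N (entrywise matrix products over 𝒜). Then the matrix L = T⁺·M satisfies the reflection equation R·L₁·R·L₁ = L₁·R·L₁·R, where L₁ = L⊗I_N. -/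
open Matrix

/-- For an `N×N` matrix `X` with entries in `A`, `leg1 X = X ⊗ I_N` as an `N²×N²` matrix. -/
def leg1 {N : ℕ} {A : Type*} [Semiring A] (X : Matrix (Fin N) (Fin N) A) :
    Matrix (Fin N × Fin N) (Fin N × Fin N) A :=
  Matrix.of fun a b => X a.1 b.1 * (if a.2 = b.2 then 1 else 0)

/-- For an `N×N` matrix `X` with entries in `A`, `leg2 X = I_N ⊗ X` as an `N²×N²` matrix. -/
def leg2 {N : ℕ} {A : Type*} [Semiring A] (X : Matrix (Fin N) (Fin N) A) :
    Matrix (Fin N × Fin N) (Fin N × Fin N) A :=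
  Matrix.of fun a b => (if a.1 = b.1 then 1 else 0) * X a.2 b.2

/-- Embedding of a complex matrix into matrices over a `ℂ`-algebra `A`. -/
def emb {n : Type*} {A : Type*} [Semiring A] [Algebra ℂ A] (R : Matrix n n ℂ) :
    Matrix n n A :=
  R.map (algebraMap ℂ A)

lemma leg1_mul {N : ℕ} {A : Type*} [Semiring A] (X Y : Matrix (Fin N) (Fin N) A) :
    leg1 (X * Y) = leg1 X * leg1 Y := by
  ext a b
  simp [leg1, Matrix.mul_apply, Fintype.sum_prod_type, mul_ite, ite_mul,
    Finset.sum_ite_eq, Finset.sum_mul]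

lemma leg2_mul {N : ℕ} {A : Type*} [Semiring A] (X Y : Matrix (Fin N) (Fin N) A) :
    leg2 (X * Y) = leg2 X * leg2 Y := by
  ext a b
  simp [leg2, Matrix.mul_apply, Fintype.sum_prod_type, mul_ite, ite_mul,
    Finset.sum_ite_eq, Finset.mul_sum]

lemma leg1_one {N : ℕ} {A : Type*} [Semiring A] :
    (leg1 (1 : Matrix (Fin N) (Fin N) A)) = 1 := by
  ext a b
  simp only [leg1, Matrix.of_apply, Matrix.one_apply, Prod.ext_iff, ite_and, ite_mul,
    one_mul, zero_mul]

lemma leg2_one {N : ℕ} {A : Type*} [Semiring A] :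
    (leg2 (1 : Matrix (Fin N) (Fin N) A)) = 1 := by
  ext a b
  simp only [leg2, Matrix.of_apply, Matrix.one_apply, Prod.ext_iff, ite_and, mul_ite,
    mul_one, mul_zero]
  split_ifs <;> rfl

/-- from a couple of RTT algebras with generating matrices `T⁺, T⁻`
(and `M` a two-sided inverse of `T⁻`), the matrix `L = T⁺·M` satisfies the reflection
equation `R·L₁·R·L₁ = L₁·R·L₁·R`. -/
theorem reflection_from_double_RTT {N : ℕ} {A : Type*} [Ring A] [Algebra ℂ A]
    (R : Matrix (Fin N × Fin N) (Fin N × Fin N) ℂ)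
    (hRinv : IsUnit R)
    (hbraid : op12 R * op23 R * op12 R = op23 R * op12 R * op23 R)
    (Tp Tm M : Matrix (Fin N) (Fin N) A)
    (h1 : (emb R : Matrix (Fin N × Fin N) (Fin N × Fin N) A) * (leg1 Tp * leg2 Tp) =
      (leg1 Tp * leg2 Tp) * emb R)
    (h2 : (emb R : Matrix (Fin N × Fin N) (Fin N × Fin N) A) * (leg1 Tm * leg2 Tm) =
      (leg1 Tm * leg2 Tm) * emb R)
    (h3 : (emb R : Matrix (Fin N × Fin N) (Fin N × Fin N) A) * (leg1 Tp * leg2 Tm) =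
      (leg1 Tm * leg2 Tp) * emb R)
    (h4 : Tm * M = 1) (h5 : M * Tm = 1) :
    emb R * leg1 (Tp * M) * emb R * leg1 (Tp * M) =
      leg1 (Tp * M) * emb R * leg1 (Tp * M) * emb R := by
  set E := (emb R : Matrix (Fin N × Fin N) (Fin N × Fin N) A) with hE
  -- abbreviations
  have i1a : leg1 Tm * leg1 M = 1 := by rw [← leg1_mul, h4, leg1_one]
  have i1b : leg1 M * leg1 Tm = 1 := by rw [← leg1_mul, h5, leg1_one]
  have i2a : leg2 Tm * leg2 M = 1 := by rw [← leg2_mul, h4, leg2_one]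
  have i2b : leg2 M * leg2 Tm = 1 := by rw [← leg2_mul, h5, leg2_one]
  -- (c'): M₁ R T₁⁺ = T₂⁺ R M₂
  have hc : leg1 M * E * leg1 Tp = leg2 Tp * E * leg2 M := by
    have e1 : E * leg1 Tp = leg1 Tm * (leg2 Tp * (E * leg2 M)) := by
      have := congrArg (· * leg2 M) h3
      simpa [mul_assoc, i2a] using this
    calc leg1 M * E * leg1 Tp
        = leg1 M * (E * leg1 Tp) := by rw [mul_assoc]
      _ = leg1 M * (leg1 Tm * (leg2 Tp * (E * leg2 M))) := by rw [e1]
      _ = leg1 M * leg1 Tm * (leg2 Tp * (E * leg2 M)) := by rw [← mul_assoc]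
      _ = leg2 Tp * E * leg2 M := by rw [i1b, one_mul, ← mul_assoc]
  -- (b'): N₂ N₁ R = R N₂ N₁
  have hb : leg2 M * leg1 M * E = E * (leg2 M * leg1 M) := by
    have key : leg2 M * leg1 M * E * (leg1 Tm * leg2 Tm) = E := by
      rw [mul_assoc (leg2 M * leg1 M), h2]
      simp only [← mul_assoc]
      rw [mul_assoc (leg2 M), i1b, mul_one, i2b, one_mul]
    have u : (leg1 Tm * leg2 Tm) * (leg2 M * leg1 M) = 1 := by
      rw [mul_assoc, ← mul_assoc (leg2 Tm), i2a, one_mul, i1a]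
    calc leg2 M * leg1 M * E
        = leg2 M * leg1 M * E * ((leg1 Tm * leg2 Tm) * (leg2 M * leg1 M)) := by
          rw [u, mul_one]
      _ = leg2 M * leg1 M * E * (leg1 Tm * leg2 Tm) * (leg2 M * leg1 M) := by
          rw [mul_assoc (leg2 M * leg1 M * E)]
      _ = E * (leg2 M * leg1 M) := by rw [key]
  -- main computation
  rw [leg1_mul]
  calc E * (leg1 Tp * leg1 M) * E * (leg1 Tp * leg1 M)
      = E * leg1 Tp * (leg1 M * E * leg1 Tp) * leg1 M := by
        simp only [mul_assoc]
    _ = E * (leg1 Tp * leg2 Tp) * E * (leg2 M * leg1 M) := by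
        rw [hc]; simp only [mul_assoc]
    _ = leg1 Tp * leg2 Tp * E * (E * (leg2 M * leg1 M)) := by
        rw [h1]; simp only [mul_assoc]
    _ = leg1 Tp * leg2 Tp * E * (leg2 M * leg1 M * E) := by rw [hb]
    _ = leg1 Tp * (leg2 Tp * E * leg2 M) * leg1 M * E := by simp only [mul_assoc]
    _ = leg1 Tp * (leg1 M * E * leg1 Tp) * leg1 M * E := by rw [hc]
    _ = leg1 Tp * leg1 M * E * (leg1 Tp * leg1 M) * E := by simp only [mul_assoc]
end

section
/- Let R be a Hecke symmetry on ℂ^N with parameter q ∈ ℂ \ {0,1,−1}, 𝒜 an associative unital ℂ-algebra, and C a fixed N×N complex matrix satisfying: (i) Tr_{R(2)} R₁₂ = I_N; (ii) Tr_R I_N = α; (iii) for every N×N matrix A over 𝒜, Tr_{R(2)}(R₁₂·A₁·R₁₂⁻¹) = (Tr_R A)·I_N = Tr_{R(2)}(R₁₂⁻¹·A₁·R₁₂). Let g₁, g₂, g₃, g₄ ∈ ℂ satisfy (q−q⁻¹) + g₁ + g₂ + α·g₁g₂ = 0 and (q−q⁻¹) + g₃ + g₄ + α·g₃g₄ = 0.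 If N×N matrices K, L over 𝒜 satisfy the generalized reflection equation (R + g₁I)·K₁·(R + g₂I)·L₁ = L₁·(R + g₃I)·K₁·(R + g₄I), then (Tr_R K)·L = L·(Tr_R K). -/
open Matrix

/-- The `R`-trace: `Tr_R X = Σ_{i,j} C^i_j X^j_i`. -/
def trR {N : ℕ} {A : Type*} [Ring A] [Algebra ℂ A]
    (C : Matrix (Fin N) (Fin N) ℂ) (X : Matrix (Fin N) (Fin N) A) : A :=
  ∑ i, ∑ j, C i j • X j i

/-- The partial `R`-trace over the second factor. -/
def trR2 {N : ℕ} {A : Type*} [Ring A] [Algebra ℂ A]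
    (C : Matrix (Fin N) (Fin N) ℂ) (M : Matrix (Fin N × Fin N) (Fin N × Fin N) A) :
    Matrix (Fin N) (Fin N) A :=
  Matrix.of fun r s => ∑ a, ∑ b, C a b • M (r, b) (s, a)


section helpers
variable {N : ℕ} {A : Type*} [Ring A] [Algebra ℂ A]
variable (C : Matrix (Fin N) (Fin N) ℂ)

lemma my_sum3_comm {B : Type*} [AddCommMonoid B] (f : Fin N → Fin N → Fin N → B) :
    (∑ a, ∑ b, ∑ c, f a b c) = ∑ c, ∑ a, ∑ b, f a b c :=
  (Finset.sum_congr rfl fun _ _ => Finset.sum_comm).trans Finset.sum_comm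

lemma my_emb_add (M P : Matrix (Fin N × Fin N) (Fin N × Fin N) ℂ) :
    (emb (M + P) : Matrix (Fin N × Fin N) (Fin N × Fin N) A) = emb M + emb P := by
  ext x y; simp [emb]

lemma my_emb_smul (z : ℂ) (M : Matrix (Fin N × Fin N) (Fin N × Fin N) ℂ) :
    (emb (z • M) : Matrix (Fin N × Fin N) (Fin N × Fin N) A) = z • emb M := by
  ext x y
  simp only [emb, Matrix.map_apply, Matrix.smul_apply, smul_eq_mul, _root_.map_mul,
    ← Algebra.smul_def]

lemma my_emb_one :
    (emb (1 : Matrix (Fin N × Fin N) (Fin N × Fin N) ℂ) : Matrix (Fin N × Fin N) (Fin N × Fin N) A) = 1 := by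
  ext x y; simp [emb, Matrix.one_apply, apply_ite (algebraMap ℂ A)]

lemma my_emb_mul (M P : Matrix (Fin N × Fin N) (Fin N × Fin N) ℂ) :
    (emb (M * P) : Matrix (Fin N × Fin N) (Fin N × Fin N) A) = emb M * emb P := by
  simp [emb, Matrix.map_mul]

lemma my_trR2_add (M P : Matrix (Fin N × Fin N) (Fin N × Fin N) A) :
    trR2 C (M + P) = trR2 C M + trR2 C P := by
  ext r s; simp [trR2, smul_add, Finset.sum_add_distrib]

lemma my_trR2_smul (z : ℂ) (M : Matrix (Fin N × Fin N) (Fin N × Fin N) A) :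
    trR2 C (z • M) = z • trR2 C M := by
  ext r s
  simp only [trR2, Matrix.of_apply, Matrix.smul_apply, Finset.smul_sum]
  refine Finset.sum_congr rfl fun a _ => Finset.sum_congr rfl fun b _ => ?_
  rw [smul_comm]

lemma my_trR2_mul_leg1 (M : Matrix (Fin N × Fin N) (Fin N × Fin N) A)
    (L : Matrix (Fin N) (Fin N) A) :
    trR2 C (M * leg1 L) = trR2 C M * L := by
  ext r s
  simp only [trR2, Matrix.of_apply, Matrix.mul_apply, leg1, Fintype.sum_prod_type,
    mul_ite, mul_one, mul_zero, Finset.sum_ite_eq', Finset.mem_univ, if_true,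
    Finset.smul_sum, Finset.sum_mul, smul_mul_assoc, ← mul_assoc]
  exact my_sum3_comm _

lemma my_trR2_leg1_mul (M : Matrix (Fin N × Fin N) (Fin N × Fin N) A)
    (L : Matrix (Fin N) (Fin N) A) :
    trR2 C (leg1 L * M) = L * trR2 C M := by
  ext r s
  simp only [trR2, Matrix.of_apply, Matrix.mul_apply, leg1, Fintype.sum_prod_type,
    ite_mul, one_mul, zero_mul, mul_ite, mul_one, mul_zero,
    Finset.sum_ite_eq, Finset.sum_ite_eq', Finset.mem_univ, if_true,
    Finset.smul_sum, Finset.mul_sum, mul_smul_comm]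
  exact my_sum3_comm _

lemma my_trR2_leg1 (K : Matrix (Fin N) (Fin N) A) :
    trR2 C (leg1 K) = (∑ a, C a a) • K := by
  ext r s
  simp only [trR2, Matrix.of_apply, leg1, Matrix.smul_apply, Finset.sum_smul,
    smul_ite, mul_ite, mul_one, mul_zero, smul_zero]
  refine Finset.sum_congr rfl fun a _ => ?_
  rw [Finset.sum_eq_single a] <;> simp +contextual [smul_smul]

lemma my_trR2_emb_mul_leg1 (S : Matrix (Fin N × Fin N) (Fin N × Fin N) ℂ)
    (h : trR2 C S = (1 : Matrix (Fin N) (Fin N) ℂ)) (K : Matrix (Fin N) (Fin N) A) :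
    trR2 C (emb S * leg1 K) = K := by
  ext r s
  have h' : ∀ c, (∑ a, ∑ b, C a b * S (r, b) (c, a)) = if r = c then 1 else 0 := by
    intro c
    have := congrArg (fun M => M r c) h
    simpa [trR2, Matrix.one_apply] using this
  simp only [trR2, Matrix.of_apply, Matrix.mul_apply, leg1, emb, Matrix.map_apply,
    Fintype.sum_prod_type, mul_ite, mul_one, mul_zero, Finset.sum_ite_eq',
    Finset.mem_univ, if_true]
  have step : ∀ a b c, C a b • (algebraMap ℂ A (S (r, b) (c, a)) * K c s)
      = (C a b * S (r, b) (c, a)) • K c s := by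
    intro a b c
    rw [← Algebra.smul_def, smul_smul]
  calc (∑ a, ∑ b, C a b • ∑ c, algebraMap ℂ A (S (r, b) (c, a)) * K c s)
      = ∑ c, (∑ a, ∑ b, C a b * S (r, b) (c, a)) • K c s := by
        simp only [Finset.smul_sum, step, Finset.sum_smul]
        exact my_sum3_comm _
    _ = K r s := by simp [h']

lemma my_trR2_leg1_mul_emb (S : Matrix (Fin N × Fin N) (Fin N × Fin N) ℂ)
    (h : trR2 C S = (1 : Matrix (Fin N) (Fin N) ℂ)) (K : Matrix (Fin N) (Fin N) A) :
    trR2 C (leg1 K * emb S) = K := by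
  ext r s
  have h' : ∀ c, (∑ a, ∑ b, C a b * S (c, b) (s, a)) = if c = s then 1 else 0 := by
    intro c
    have := congrArg (fun M => M c s) h
    simpa [trR2, Matrix.one_apply] using this
  simp only [trR2, Matrix.of_apply, Matrix.mul_apply, leg1, emb, Matrix.map_apply,
    Fintype.sum_prod_type, ite_mul, one_mul, zero_mul, mul_ite, mul_one, mul_zero,
    Finset.sum_ite_eq, Finset.mem_univ, if_true]
  have step : ∀ a b c, C a b • (K r c * algebraMap ℂ A (S (c, b) (s, a)))
      = (C a b * S (c, b) (s, a)) • K r c := by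
    intro a b c
    rw [← Algebra.commutes, ← Algebra.smul_def, smul_smul]
  calc (∑ a, ∑ b, C a b • ∑ c, K r c * algebraMap ℂ A (S (c, b) (s, a)))
      = ∑ c, (∑ a, ∑ b, C a b * S (c, b) (s, a)) • K r c := by
        simp only [Finset.smul_sum, step, Finset.sum_smul]
        exact my_sum3_comm _
    _ = K r s := by simp [h']

end helpers

/-- if `(q−q⁻¹)+g₁+g₂+α g₁g₂ = 0` and `(q−q⁻¹)+g₃+g₄+α g₃g₄ = 0`, then the
generalized reflection equation `(R+g₁I)K₁(R+g₂I)L₁ = L₁(R+g₃I)K₁(R+g₄I)` implies that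
`Tr_R K` commutes with `L`. -/
theorem first_power_sum_central_of_sum_conditions {N : ℕ} {A : Type*} [Ring A] [Algebra ℂ A]
    (q : ℂ) (hq0 : q ≠ 0) (hq1 : q ≠ 1) (hqm1 : q ≠ -1)
    (R : Matrix (Fin N × Fin N) (Fin N × Fin N) ℂ)
    (hRinv : IsUnit R)
    (hbraid : op12 R * op23 R * op12 R = op23 R * op12 R * op23 R)
    (hHecke : (R - q • (1 : Matrix (Fin N × Fin N) (Fin N × Fin N) ℂ)) *
      (R + q⁻¹ • (1 : Matrix (Fin N × Fin N) (Fin N × Fin N) ℂ)) = 0)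
    (C : Matrix (Fin N) (Fin N) ℂ) (α : ℂ)
    (hi : trR2 C R = (1 : Matrix (Fin N) (Fin N) ℂ))
    (hii : trR C (1 : Matrix (Fin N) (Fin N) ℂ) = α)
    (hiii1 : ∀ X : Matrix (Fin N) (Fin N) A,
      trR2 C (emb R * leg1 X * emb R⁻¹) = trR C X • (1 : Matrix (Fin N) (Fin N) A))
    (hiii2 : ∀ X : Matrix (Fin N) (Fin N) A,
      trR2 C (emb R⁻¹ * leg1 X * emb R) = trR C X • (1 : Matrix (Fin N) (Fin N) A))
    (g₁ g₂ g₃ g₄ : ℂ)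
    (hsum1 : (q - q⁻¹) + g₁ + g₂ + α * (g₁ * g₂) = 0)
    (hsum2 : (q - q⁻¹) + g₃ + g₄ + α * (g₃ * g₄) = 0)
    (K L : Matrix (Fin N) (Fin N) A)
    (hgRE : emb (R + g₁ • (1 : Matrix (Fin N × Fin N) (Fin N × Fin N) ℂ)) * leg1 K *
        emb (R + g₂ • (1 : Matrix (Fin N × Fin N) (Fin N × Fin N) ℂ)) * leg1 L =
      leg1 L * emb (R + g₃ • (1 : Matrix (Fin N × Fin N) (Fin N × Fin N) ℂ)) * leg1 K *
        emb (R + g₄ • (1 : Matrix (Fin N × Fin N) (Fin N × Fin N) ℂ))) :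
    trR C K • L = L * (trR C K • (1 : Matrix (Fin N) (Fin N) A)) := by
  -- Hecke relation : R * R = (q - q⁻¹) • R + 1
  have hsq : R * R = (q - q⁻¹) • R + 1 := by
    have expand : (R - q • 1) * (R + q⁻¹ • 1) = R * R - (q - q⁻¹) • R - (q * q⁻¹) • 1 := by
      simp only [sub_mul, mul_add, add_mul, smul_mul_assoc, mul_smul_comm, one_mul,
        mul_one, smul_smul, sub_smul]
      module
    rw [mul_inv_cancel₀ hq0, one_smul] at expand
    have h0 : R * R - (q - q⁻¹) • R - 1 = 0 := by rw [← expand, hHecke]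
    exact sub_eq_zero.mp (by rw [sub_sub] at h0; exact h0)
  have hrinv : R⁻¹ = R - (q - q⁻¹) • 1 := by
    apply Matrix.inv_eq_right_inv
    rw [mul_sub, mul_smul_comm, mul_one, hsq, add_sub_cancel_left]
  have hRdec : R = R⁻¹ + (q - q⁻¹) • 1 := by rw [hrinv]; abel
  -- trace of α
  have hα : (∑ a, C a a) = α := by
    rw [← hii]
    simp [trR, Matrix.one_apply]
  -- the sandwiched trace
  have hsplit : (emb R : Matrix (Fin N × Fin N) (Fin N × Fin N) A)
      = emb R⁻¹ + (q - q⁻¹) • 1 := by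
    conv_lhs => rw [hRdec]
    rw [my_emb_add, my_emb_smul, my_emb_one]
  have hsand : trR2 C (emb R * leg1 K * emb R) =
      trR C K • (1 : Matrix (Fin N) (Fin N) A) + (q - q⁻¹) • K := by
    have hprod : (emb R : Matrix (Fin N × Fin N) (Fin N × Fin N) A) * leg1 K * emb R
        = emb R * leg1 K * emb R⁻¹ + (q - q⁻¹) • (emb R * leg1 K) := by
      nth_rewrite 2 [hsplit]
      rw [mul_add, mul_smul_comm, mul_one]
    rw [hprod, my_trR2_add, my_trR2_smul, hiii1, my_trR2_emb_mul_leg1 C R hi]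
  -- key computation for one sandwich
  have key : ∀ g h : ℂ, (q - q⁻¹) + g + h + α * (g * h) = 0 →
      trR2 C (emb (R + g • 1) * leg1 K * emb (R + h • 1)) =
        trR C K • (1 : Matrix (Fin N) (Fin N) A) := by
    intro g h hg
    have expand : (emb (R + g • 1) : Matrix (Fin N × Fin N) (Fin N × Fin N) A) * leg1 K *
        emb (R + h • 1)
        = emb R * leg1 K * emb R + h • (emb R * leg1 K) + g • (leg1 K * emb R)
          + (g * h) • leg1 K := by
      rw [my_emb_add, my_emb_smul, my_emb_one, my_emb_add, my_emb_smul, my_emb_one]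
      simp only [add_mul, mul_add, smul_mul_assoc, mul_smul_comm, one_mul, mul_one, smul_smul]
      module
    rw [expand, my_trR2_add, my_trR2_add, my_trR2_add, my_trR2_smul, my_trR2_smul,
      my_trR2_smul, hsand, my_trR2_emb_mul_leg1 C R hi, my_trR2_leg1_mul_emb C R hi,
      my_trR2_leg1, hα]
    have hzero : (q - q⁻¹) • K + (h • K + (g • K + (g * h) • α • K)) = 0 := by
      have hc : (q - q⁻¹) • K + (h • K + (g • K + (g * h) • α • K))
          = ((q - q⁻¹) + g + h + α * (g * h)) • K := by module
      rw [hc, hg, zero_smul]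
    rw [add_assoc (trR C K • (1 : Matrix (Fin N) (Fin N) A) + (q - q⁻¹) • K + h • K),
      add_assoc (trR C K • (1 : Matrix (Fin N) (Fin N) A) + (q - q⁻¹) • K),
      add_assoc (trR C K • (1 : Matrix (Fin N) (Fin N) A)), hzero, add_zero]
  -- apply trR2 to the reflection equation
  have hL : trR2 C (emb (R + g₁ • 1) * leg1 K * emb (R + g₂ • 1) * leg1 L)
      = trR C K • (1 : Matrix (Fin N) (Fin N) A) * L := by
    rw [my_trR2_mul_leg1, key g₁ g₂ hsum1, smul_mul_assoc]
  have hR : trR2 C (leg1 L * emb (R + g₃ • 1) * leg1 K * emb (R + g₄ • 1))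
      = L * (trR C K • (1 : Matrix (Fin N) (Fin N) A)) := by
    rw [show (leg1 L : Matrix (Fin N × Fin N) (Fin N × Fin N) A) * emb (R + g₃ • 1) * leg1 K *
        emb (R + g₄ • 1) = leg1 L * (emb (R + g₃ • 1) * leg1 K * emb (R + g₄ • 1)) by
      rw [mul_assoc, mul_assoc, mul_assoc]]
    rw [my_trR2_leg1_mul, key g₃ g₄ hsum2]
  have := hL.symm.trans ((congrArg (trR2 C) hgRE).trans hR)
  rw [smul_mul_assoc, one_mul] at this
  exact this
end

section
/- Fix q ∈ ℂ \ {0,1,−1}, nonnegative integers m, n, and set λ = q − q⁻¹, α = q^{n−m}·(q^{m−n} − q^{n−m})/(q − q⁻¹), and f(x) = −(q−q⁻¹)x/(x−1) for x ≠ 1. Let c ∈ ℂ, c ≠ 0. Then the identity λ + f(u/v) + f(vc/u) + α·f(u/v)·f(vc/u) = 0 holds for all u, v ∈ ℂ \ {0} with u ≠ v and u ≠ cv, if and only if c = q^{2(m−n)}. -/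
/-- The shift function of the Baxterized trigonometric `R`-matrix:
`f(x) = −(q−q⁻¹)x/(x−1)`. -/
noncomputable def fshift (q x : ℂ) : ℂ := -(q - q⁻¹) * x / (x - 1)

/-- `α = q^{n−m}·(m−n)_q = q^{n−m}·(q^{m−n} − q^{n−m})/(q − q⁻¹)`, the `R`-trace of the
identity for a Hecke symmetry of bi-rank `(m|n)`. -/
noncomputable def alphaHecke (q : ℂ) (m n : ℕ) : ℂ :=
  q ^ ((n : ℤ) - m) * (q ^ ((m : ℤ) - n) - q ^ ((n : ℤ) - m)) / (q - q⁻¹)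

lemma key_abstract (L a x y : ℂ) (hL : L ≠ 0) (hx1 : x - 1 ≠ 0) (hy1 : y - 1 ≠ 0) :
    L + (-L * x / (x - 1)) + (-L * y / (y - 1)) +
      ((1 - a ^ 2) / L) * (-L * x / (x - 1)) * (-L * y / (y - 1))
      = L * (1 - a ^ 2 * (x * y)) / ((x - 1) * (y - 1)) := by
  field_simp
  ring

lemma key_identity (q : ℂ) (hq0 : q ≠ 0) (hl : q - q⁻¹ ≠ 0) (m n : ℕ) (x y : ℂ)
    (hx : x ≠ 1) (hy : y ≠ 1) :
    (q - q⁻¹) + fshift q x + fshift q y + alphaHecke q m n * fshift q x * fshift q y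
      = (q - q⁻¹) * (1 - (q ^ ((n : ℤ) - m)) ^ 2 * (x * y)) / ((x - 1) * (y - 1)) := by
  have hx1 : x - 1 ≠ 0 := sub_ne_zero.mpr hx
  have hy1 : y - 1 ≠ 0 := sub_ne_zero.mpr hy
  have ha0 : q ^ ((n : ℤ) - m) ≠ 0 := zpow_ne_zero _ hq0
  have hA : alphaHecke q m n = (1 - (q ^ ((n : ℤ) - m)) ^ 2) / (q - q⁻¹) := by
    unfold alphaHecke
    rw [show ((m : ℤ) - n) = -((n : ℤ) - m) by ring, zpow_neg]
    field_simp
  rw [hA]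
  unfold fshift
  exact key_abstract _ _ _ _ hl hx1 hy1

/-- the centrality condition
`λ + f(u/v) + f(vc/u) + α·f(u/v)·f(vc/u) = 0` holds for all admissible `u, v`
iff the charge is critical: `c = q^{2(m−n)}`. -/
theorem critical_charge_iff (q : ℂ) (hq0 : q ≠ 0) (hq1 : q ≠ 1) (hqm1 : q ≠ -1)
    (m n : ℕ) (c : ℂ) (hc : c ≠ 0) :
    (∀ u v : ℂ, u ≠ 0 → v ≠ 0 → u ≠ v → u ≠ c * v →
      (q - q⁻¹) + fshift q (u / v) + fshift q (v * c / u) +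
        alphaHecke q m n * fshift q (u / v) * fshift q (v * c / u) = 0)
    ↔ c = q ^ (2 * ((m : ℤ) - n)) := by
  have hl : q - q⁻¹ ≠ 0 := by
    intro h
    have hq2 : q * q = 1 := by
      have := sub_eq_zero.mp h
      field_simp at this
      linear_combination this
    have : (q - 1) * (q + 1) = 0 := by linear_combination hq2
    rcases mul_eq_zero.mp this with h' | h'
    · exact hq1 (by linear_combination h')
    · exact hqm1 (by linear_combination h')
  have ha0 : q ^ ((n : ℤ) - m) ≠ 0 := zpow_ne_zero _ hq0
  have hsinv : q ^ (2 * ((m : ℤ) - n)) * (q ^ ((n : ℤ) - m)) ^ 2 = 1 := by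
    rw [← zpow_natCast (q ^ ((n : ℤ) - m)) 2, ← zpow_mul, ← zpow_add₀ hq0,
      show (2 * ((m : ℤ) - n) + ((n : ℤ) - m) * ((2:ℕ):ℤ)) = 0 by push_cast; ring, zpow_zero]
  constructor
  · intro H
    set u : ℂ := if c = 2 then 3 else 2 with hu_def
    have hu0 : u ≠ 0 := by rw [hu_def]; split <;> norm_num
    have hu1 : u ≠ 1 := by rw [hu_def]; split <;> norm_num
    have huc : u ≠ c := by
      rw [hu_def]; split
      · rename_i h; rw [h]; norm_num
      · rename_i h; intro h'; exact h h'.symm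
    have H1 := H u 1 hu0 one_ne_zero hu1 (by rwa [mul_one])
    have hx : u / 1 ≠ 1 := by rwa [div_one]
    have hy : 1 * c / u ≠ 1 := by
      rw [one_mul]
      intro h
      exact huc (by field_simp at h; exact h.symm)
    rw [key_identity q hq0 hl m n _ _ hx hy] at H1
    have hxy : (u / 1) * (1 * c / u) = c := by field_simp
    rw [hxy] at H1
    have hd : (u / 1 - 1) * (1 * c / u - 1) ≠ 0 :=
      mul_ne_zero (sub_ne_zero.mpr hx) (sub_ne_zero.mpr hy)
    have h0 : 1 - (q ^ ((n : ℤ) - m)) ^ 2 * c = 0 := by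
      rcases mul_eq_zero.mp ((div_eq_zero_iff.mp H1).resolve_right hd) with h | h
      · exact absurd h hl
      · exact h
    have h1 : (q ^ ((n : ℤ) - m)) ^ 2 * c = 1 := by linear_combination -h0
    linear_combination q ^ (2 * ((m:ℤ) - n)) * h1 - c * hsinv
  · intro hcq u v hu hv huv hucv
    have hx : u / v ≠ 1 := by
      intro h; exact huv ((div_eq_one_iff_eq hv).mp h)
    have hy : v * c / u ≠ 1 := by
      intro h
      have := (div_eq_one_iff_eq hu).mp h
      exact hucv (by rw [← this]; ring)
    rw [key_identity q hq0 hl m n _ _ hx hy]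
    have hxy : (u / v) * (v * c / u) = c := by field_simp
    rw [hxy, hcq]
    rw [show (q ^ ((n:ℤ) - m)) ^ 2 * q ^ (2 * ((m:ℤ) - n)) = 1 by
      rw [mul_comm]; exact hsinv]
    simp
end
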